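/- Every topological space X contains a greatest κ-weakly-resolvable open-closed-generated subspace: namely, the closure of the union of all κ-weakly-resolvable subsets of X is itself κ-weakly-resolvable and contains every κ-weakly-resolvable subset of X. -/

import Mathlib

set_option autoImplicit false

open Cardinal Set

/-- A topological space `X` is `κ`-weakly-resolvable if there is `f : X → κ` such that
`{x ∈ X : f x ≥ α}` is dense in `X` for every `α < κ`. -/
def WeaklyResolvable (X : Type*) [TopologicalSpace X] (κ : Cardinal) : Prop :=
  ∃ f : X → κ.ord.ToType, ∀ α : κ.ord.ToType, Dense {x : X | α ≤ f x}

/-- the closure of the union of all `κ`-weakly-resolvable subsets of `X`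
is itself `κ`-weakly-resolvable, and it contains every `κ`-weakly-resolvable subset. -/
theorem greatest_weaklyResolvable_subspace (X : Type*) [TopologicalSpace X]
    (κ : Cardinal) (hκ : ℵ₀ ≤ κ) :
    WeaklyResolvable (closure (⋃₀ {Y : Set X | WeaklyResolvable Y κ})) κ ∧
      ∀ Y : Set X, WeaklyResolvable Y κ →
        Y ⊆ closure (⋃₀ {Y : Set X | WeaklyResolvable Y κ}) := by
  classical
  constructor
  · -- the hard part
    set W : Set X := ⋃₀ {Y : Set X | WeaklyResolvable Y κ} with hW
    have hne : Nonempty κ.ord.ToType := by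
      rw [Ordinal.toType_nonempty_iff_ne_zero, ne_eq, Cardinal.ord_eq_zero]
      rintro rfl
      exact (Cardinal.aleph0_pos.not_ge) hκ
    set ι := {Y : Set X // WeaklyResolvable Y κ} with hι
    have hchoice : ∀ i : ι, WeaklyResolvable i.1 κ := fun i => i.2
    choose g hg using hchoice
    let r : ι → ι → Prop := WellOrderingRel
    have hwo : IsWellOrder ι r := WellOrderingRel.isWellOrder
    have hwf : WellFounded r := hwo.wf
    have memW : ∀ x : X, x ∈ W → {i : ι | x ∈ i.1}.Nonempty := by
      rintro x ⟨Y, hY, hxY⟩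
      exact ⟨⟨Y, hY⟩, hxY⟩
    let f : closure W → κ.ord.ToType := fun x =>
      if h : (x : X) ∈ W then
        g (hwf.min {i : ι | (x : X) ∈ i.1} (memW x h))
          ⟨x, hwf.min_mem {i : ι | (x : X) ∈ i.1} (memW x h)⟩
      else Classical.arbitrary _
    refine ⟨f, fun α => ?_⟩
    rw [dense_iff_inter_open]
    rintro U hU hUne
    obtain ⟨V, hV, rfl⟩ := isOpen_induced_iff.mp hU
    obtain ⟨⟨x, hxW⟩, hxV⟩ := hUne
    -- V meets W
    have hVW : (V ∩ W).Nonempty := by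
      have := mem_closure_iff.mp hxW V hV hxV
      exact this.imp fun y hy => ⟨hy.1, hy.2⟩
    -- the minimal index whose set meets V
    have hTne : {i : ι | (V ∩ i.1).Nonempty}.Nonempty := by
      obtain ⟨y, hyV, Y, hY, hyY⟩ := hVW
      exact ⟨⟨Y, hY⟩, y, hyV, hyY⟩
    set T := {i : ι | (V ∩ i.1).Nonempty} with hT
    set i₀ := hwf.min T hTne with hi₀
    have hi₀T : (V ∩ i₀.1).Nonempty := hwf.min_mem T hTne
    -- use density of g i₀ ≥ α within i₀.1
    have hdense := hg i₀ α
    rw [dense_iff_inter_open] at hdense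
    obtain ⟨⟨z, hz⟩, hzV, hzα⟩ :=
      hdense (Subtype.val ⁻¹' V) (hV.preimage continuous_subtype_val)
        (by obtain ⟨y, hyV, hyi⟩ := hi₀T; exact ⟨⟨y, hyi⟩, hyV⟩)
    have hzW : z ∈ W := ⟨i₀.1, i₀.2, hz⟩
    have hzC : z ∈ closure W := subset_closure hzW
    -- show the minimal index for z is i₀
    have hzS : {i : ι | z ∈ i.1}.Nonempty := memW z hzW
    set j := hwf.min {i : ι | z ∈ i.1} hzS with hj
    have hjz : z ∈ j.1 := hwf.min_mem _ hzS
    have hji : j = i₀ := by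
      have h1 : ¬ r j i₀ := hwf.not_lt_min T ⟨z, hzV, hjz⟩
      have h2 : ¬ r i₀ j := hwf.not_lt_min {i : ι | z ∈ i.1} hz
      exact hwo.trichotomous j i₀ h1 h2
    refine ⟨⟨z, hzC⟩, hzV, ?_⟩
    show α ≤ f ⟨z, hzC⟩
    have : f ⟨z, hzC⟩ = g j ⟨z, hjz⟩ := dif_pos hzW
    rw [this]
    have : g j ⟨z, hjz⟩ = g i₀ ⟨z, hz⟩ := by
      clear_value j i₀
      subst hji; rfl
    rw [this]
    exact hzα
  · intro Y hY
    have hmem : Y ∈ {Y : Set X | WeaklyResolvable Y κ} := hY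
    exact (subset_sUnion_of_mem hmem).trans subset_closure
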